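/- Let 0 → V →i B →p A → 0 be an abelian extension of multiplicative 3-Hom-ρ-Lie algebras (A,φ), (V,φ_V), (B,ψ), let δ : A → B be a section of p, and define μ : ∧²A → End(V) by μ(f₁,f₂)(u) = [δ(f₁), δ(f₂), u]_B. Then (V, μ, φ_V) is a representation of (A,φ) (with β = φ_V), i.e. μ satisfies the representation conditions (R1)–(R4). -/

import Mathlib

/-- A multiplicative-free `G`-graded `3`-Hom-`ρ`-Lie algebra over the field `k`:
a `G`-graded vector space `A = ⊕ₐ Aₐ` with an (internal) grading, a trilinear
bracket which is degree-additive and `ρ`-skew-symmetric on homogeneous elements,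
and an even linear map `φ` satisfying the `ρ`-fundamental identity. -/
structure ThreeHomRhoLie (k G A : Type*) [Field k] [AddCommGroup G] [DecidableEq G]
    [AddCommGroup A] [Module k A] (ρ : G → G → k) where
  grading : G → Submodule k A
  isInternal : DirectSum.IsInternal grading
  br : A →ₗ[k] A →ₗ[k] A →ₗ[k] A
  φ : A →ₗ[k] A
  φ_even : ∀ a : G, ∀ f ∈ grading a, φ f ∈ grading a
  br_deg : ∀ (a b c : G), ∀ f ∈ grading a, ∀ g ∈ grading b, ∀ h ∈ grading c,
    br f g h ∈ grading (a + b + c)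
  skew₁₂ : ∀ (a b : G), ∀ f ∈ grading a, ∀ g ∈ grading b, ∀ h : A,
    br f g h = (-(ρ a b)) • br g f h
  skew₂₃ : ∀ (b c : G), ∀ g ∈ grading b, ∀ h ∈ grading c, ∀ f : A,
    br f g h = (-(ρ b c)) • br f h g
  fund : ∀ (a₁ a₂ b₁ b₂ b₃ : G), ∀ f₁ ∈ grading a₁, ∀ f₂ ∈ grading a₂,
    ∀ g₁ ∈ grading b₁, ∀ g₂ ∈ grading b₂, ∀ g₃ ∈ grading b₃,
    br (φ f₁) (φ f₂) (br g₁ g₂ g₃) =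
      br (br f₁ f₂ g₁) (φ g₂) (φ g₃)
        + ρ (a₁ + a₂) b₁ • br (φ g₁) (br f₁ f₂ g₂) (φ g₃)
        + ρ (a₁ + a₂) (b₁ + b₂) • br (φ g₁) (φ g₂) (br f₁ f₂ g₃)

/-- A representation `(V, μ, β)` of a `3`-Hom-`ρ`-Lie algebra `L` on a `G`-graded
vector space `V` (grading `𝒱`) with respect to the even endomorphism `β`:
conditions (R1)–(R4), stated on homogeneous elements. -/
structure IsRhoRep {k G A : Type*} [Field k] [AddCommGroup G] [DecidableEq G]
    [AddCommGroup A] [Module k A] {ρ : G → G → k} (L : ThreeHomRhoLie k G A ρ)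
    {V : Type*} [AddCommGroup V] [Module k V]
    (𝒱 : G → Submodule k V) (β : V →ₗ[k] V)
    (μ : A →ₗ[k] A →ₗ[k] Module.End k V) : Prop where
  β_even : ∀ a : G, ∀ v ∈ 𝒱 a, β v ∈ 𝒱 a
  μ_deg : ∀ (a b c : G), ∀ f ∈ L.grading a, ∀ g ∈ L.grading b, ∀ v ∈ 𝒱 c,
    μ f g v ∈ 𝒱 (a + b + c)
  μ_skew : ∀ (a b c : G), ∀ f ∈ L.grading a, ∀ g ∈ L.grading b, ∀ v ∈ 𝒱 c,
    μ f g v = (-(ρ a b)) • μ g f v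
  rep₁ : ∀ (a₁ a₂ b₁ b₂ c : G), ∀ f₁ ∈ L.grading a₁, ∀ f₂ ∈ L.grading a₂,
    ∀ g₁ ∈ L.grading b₁, ∀ g₂ ∈ L.grading b₂, ∀ v ∈ 𝒱 c,
    μ (L.br f₁ f₂ g₁) (L.φ g₂) (β v)
        + ρ (a₁ + a₂) b₁ • μ (L.φ g₁) (L.br f₁ f₂ g₂) (β v) =
      μ (L.φ f₁) (L.φ f₂) (μ g₁ g₂ v)
        - ρ (a₁ + a₂) (b₁ + b₂) • μ (L.φ g₁) (L.φ g₂) (μ f₁ f₂ v)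
  rep₂ : ∀ (b₁ b₂ b₃ c d : G), ∀ g₁ ∈ L.grading b₁, ∀ g₂ ∈ L.grading b₂,
    ∀ g₃ ∈ L.grading b₃, ∀ f ∈ L.grading c, ∀ v ∈ 𝒱 d,
    μ (L.br g₁ g₂ g₃) (L.φ f) (β v) =
      μ (L.φ g₁) (L.φ g₂) (μ g₃ f v)
        + ρ b₁ (b₂ + b₃) • μ (L.φ g₂) (L.φ g₃) (μ g₁ f v)
        + ρ (b₁ + b₂) b₃ • μ (L.φ g₃) (L.φ g₁) (μ g₂ f v)
  rep₃ : ∀ (c a₁ a₂ a₃ d : G), ∀ g ∈ L.grading c, ∀ f₁ ∈ L.grading a₁,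
    ∀ f₂ ∈ L.grading a₂, ∀ f₃ ∈ L.grading a₃, ∀ v ∈ 𝒱 d,
    μ (L.φ g) (L.br f₁ f₂ f₃) (β v) =
      ρ c (a₁ + a₂) • μ (L.φ f₁) (L.φ f₂) (μ g f₃ v)
        + (ρ c (a₂ + a₃) * ρ a₁ (a₂ + a₃)) • μ (L.φ f₂) (L.φ f₃) (μ g f₁ v)
        + (ρ c (a₁ + a₃) * ρ (a₁ + a₂) a₃) • μ (L.φ f₃) (L.φ f₁) (μ g f₂ v)
  rep₄ : ∀ (a₁ a₂ b₁ b₂ c : G), ∀ f₁ ∈ L.grading a₁, ∀ f₂ ∈ L.grading a₂,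
    ∀ g₁ ∈ L.grading b₁, ∀ g₂ ∈ L.grading b₂, ∀ v ∈ 𝒱 c,
    μ (L.φ f₁) (L.φ f₂) (μ g₁ g₂ v) =
      ρ (a₁ + a₂) (b₁ + b₂) • μ (L.φ g₁) (L.φ g₂) (μ f₁ f₂ v)
        + ρ (a₁ + a₂) b₁ • μ (L.φ g₁) (L.br f₁ f₂ g₂) (β v)
        + μ (L.br f₁ f₂ g₁) (L.φ g₂) (β v)


theorem rho_add_right {k G : Type*} [Field k] [AddCommGroup G] {ρ : G → G → k}
    (hρ₁ : ∀ a b : G, ρ a b * ρ b a = 1)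
    (hρ₂ : ∀ a b c : G, ρ (a + b) c = ρ a c * ρ b c) :
    ∀ a b c : G, ρ a (b + c) = ρ a b * ρ a c := by
  intro a b c
  have h1 := hρ₁ a (b + c)
  have h2 := hρ₂ b c a
  have h3 := hρ₁ a b
  have h4 := hρ₁ a c
  have hne : ρ (b + c) a ≠ 0 := by
    intro h; rw [h, mul_zero] at h1; exact zero_ne_one h1
  apply mul_right_cancel₀ hne
  rw [h2] at h1 ⊢
  linear_combination h1 - (ρ a c * ρ c a) * h3 - h4

theorem aux2 {k G A : Type*} [Field k] [AddCommGroup G] [DecidableEq G]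
    [AddCommGroup A] [Module k A] {ρ : G → G → k}
    (hρ₁ : ∀ a b : G, ρ a b * ρ b a = 1)
    (hρ₂ : ∀ a b c : G, ρ (a + b) c = ρ a c * ρ b c)
    (L : ThreeHomRhoLie k G A ρ) (b₁ b₂ b₃ c d : G)
    (y₁ : A) (hy₁ : y₁ ∈ L.grading b₁) (y₂ : A) (hy₂ : y₂ ∈ L.grading b₂)
    (y₃ : A) (hy₃ : y₃ ∈ L.grading b₃) (x : A) (hx : x ∈ L.grading c)
    (w : A) (hw : w ∈ L.grading d) :
    L.br (L.br y₁ y₂ y₃) (L.φ x) (L.φ w) =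
      L.br (L.φ y₁) (L.φ y₂) (L.br y₃ x w)
        + ρ b₁ (b₂ + b₃) • L.br (L.φ y₂) (L.φ y₃) (L.br y₁ x w)
        + ρ (b₁ + b₂) b₃ • L.br (L.φ y₃) (L.φ y₁) (L.br y₂ x w) := by
  have hρ₂' := rho_add_right hρ₁ hρ₂
  have hY := L.br_deg b₁ b₂ b₃ y₁ hy₁ y₂ hy₂ y₃ hy₃
  have hφx := L.φ_even c x hx
  have hφw := L.φ_even d w hw
  have S : ∀ (bj : G) (yj : A), yj ∈ L.grading bj →
      L.br x w yj = (ρ d bj * ρ c bj) • L.br yj x w := by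
    intro bj yj hyj
    rw [L.skew₂₃ d bj w hw yj hyj x, L.skew₁₂ c bj x hx yj hyj w, smul_smul, neg_mul_neg]
  rw [L.skew₁₂ (b₁ + b₂ + b₃) c (L.br y₁ y₂ y₃) hY (L.φ x) hφx (L.φ w),
    L.skew₂₃ (b₁ + b₂ + b₃) d (L.br y₁ y₂ y₃) hY (L.φ w) hφw (L.φ x),
    L.fund c d b₁ b₂ b₃ x hx w hw y₁ hy₁ y₂ hy₂ y₃ hy₃,
    S b₁ y₁ hy₁, S b₂ y₂ hy₂, S b₃ y₃ hy₃]
  simp only [map_smul, LinearMap.smul_apply]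
  rw [L.skew₁₂ (b₁ + c + d) b₂ (L.br y₁ x w) (L.br_deg b₁ c d y₁ hy₁ x hx w hw)
      (L.φ y₂) (L.φ_even b₂ y₂ hy₂) (L.φ y₃),
    L.skew₂₃ (b₁ + c + d) b₃ (L.br y₁ x w) (L.br_deg b₁ c d y₁ hy₁ x hx w hw)
      (L.φ y₃) (L.φ_even b₃ y₃ hy₃) (L.φ y₂),
    L.skew₂₃ (b₂ + c + d) b₃ (L.br y₂ x w) (L.br_deg b₂ c d y₂ hy₂ x hx w hw)
      (L.φ y₃) (L.φ_even b₃ y₃ hy₃) (L.φ y₁),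
    L.skew₁₂ b₁ b₃ (L.φ y₁) (L.φ_even b₁ y₁ hy₁) (L.φ y₃) (L.φ_even b₃ y₃ hy₃)
      (L.br y₂ x w)]
  match_scalars
  · -- coefficient of [φy₂,φy₃,[y₁ x w]]
    simp only [hρ₂, hρ₂']
    linear_combination (ρ b₁ b₂ * ρ b₁ b₃) *
      (((ρ b₂ c * ρ c b₂) * (ρ b₃ c * ρ c b₃) * (ρ b₁ d * ρ d b₁) * (ρ b₂ d * ρ d b₂)
          * (ρ b₃ d * ρ d b₃)) * hρ₁ b₁ c
        + ((ρ b₃ c * ρ c b₃) * (ρ b₁ d * ρ d b₁) * (ρ b₂ d * ρ d b₂)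
          * (ρ b₃ d * ρ d b₃)) * hρ₁ b₂ c
        + ((ρ b₁ d * ρ d b₁) * (ρ b₂ d * ρ d b₂) * (ρ b₃ d * ρ d b₃)) * hρ₁ b₃ c
        + ((ρ b₂ d * ρ d b₂) * (ρ b₃ d * ρ d b₃)) * hρ₁ b₁ d
        + ((ρ b₃ d * ρ d b₃)) * hρ₁ b₂ d
        + hρ₁ b₃ d)
  · -- coefficient of [φy₃,φy₁,[y₂ x w]]
    simp only [hρ₂, hρ₂']
    linear_combination (ρ b₂ b₃ * ρ b₁ b₃) *
      (((ρ b₂ c * ρ c b₂) * (ρ b₃ c * ρ c b₃) * (ρ b₁ d * ρ d b₁) * (ρ b₂ d * ρ d b₂)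
          * (ρ b₃ d * ρ d b₃)) * hρ₁ b₁ c
        + ((ρ b₃ c * ρ c b₃) * (ρ b₁ d * ρ d b₁) * (ρ b₂ d * ρ d b₂)
          * (ρ b₃ d * ρ d b₃)) * hρ₁ b₂ c
        + ((ρ b₁ d * ρ d b₁) * (ρ b₂ d * ρ d b₂) * (ρ b₃ d * ρ d b₃)) * hρ₁ b₃ c
        + ((ρ b₂ d * ρ d b₂) * (ρ b₃ d * ρ d b₃)) * hρ₁ b₁ d
        + ((ρ b₃ d * ρ d b₃)) * hρ₁ b₂ d
        + hρ₁ b₃ d)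
  · -- coefficient of [φy₁,φy₂,[y₃ x w]]
    simp only [hρ₂, hρ₂']
    linear_combination
      ((ρ b₂ c * ρ c b₂) * (ρ b₃ c * ρ c b₃) * (ρ b₁ d * ρ d b₁) * (ρ b₂ d * ρ d b₂)
          * (ρ b₃ d * ρ d b₃)) * hρ₁ b₁ c
        + ((ρ b₃ c * ρ c b₃) * (ρ b₁ d * ρ d b₁) * (ρ b₂ d * ρ d b₂)
          * (ρ b₃ d * ρ d b₃)) * hρ₁ b₂ c
        + ((ρ b₁ d * ρ d b₁) * (ρ b₂ d * ρ d b₂) * (ρ b₃ d * ρ d b₃)) * hρ₁ b₃ c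
        + ((ρ b₂ d * ρ d b₂) * (ρ b₃ d * ρ d b₃)) * hρ₁ b₁ d
        + ((ρ b₃ d * ρ d b₃)) * hρ₁ b₂ d
        + hρ₁ b₃ d

theorem aux3 {k G A : Type*} [Field k] [AddCommGroup G] [DecidableEq G]
    [AddCommGroup A] [Module k A] {ρ : G → G → k}
    (hρ₁ : ∀ a b : G, ρ a b * ρ b a = 1)
    (hρ₂ : ∀ a b c : G, ρ (a + b) c = ρ a c * ρ b c)
    (L : ThreeHomRhoLie k G A ρ) (c a₁ a₂ a₃ d : G)
    (y : A) (hy : y ∈ L.grading c) (x₁ : A) (hx₁ : x₁ ∈ L.grading a₁)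
    (x₂ : A) (hx₂ : x₂ ∈ L.grading a₂) (x₃ : A) (hx₃ : x₃ ∈ L.grading a₃)
    (w : A) (hw : w ∈ L.grading d) :
    L.br (L.φ y) (L.br x₁ x₂ x₃) (L.φ w) =
      ρ c (a₁ + a₂) • L.br (L.φ x₁) (L.φ x₂) (L.br y x₃ w)
        + (ρ c (a₂ + a₃) * ρ a₁ (a₂ + a₃)) • L.br (L.φ x₂) (L.φ x₃) (L.br y x₁ w)
        + (ρ c (a₁ + a₃) * ρ (a₁ + a₂) a₃) • L.br (L.φ x₃) (L.φ x₁) (L.br y x₂ w) := by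
  have hρ₂' := rho_add_right hρ₁ hρ₂
  have hX := L.br_deg a₁ a₂ a₃ x₁ hx₁ x₂ hx₂ x₃ hx₃
  have hφw := L.φ_even d w hw
  have S : ∀ (aj : G) (xj : A), xj ∈ L.grading aj →
      L.br y w xj = (-(ρ d aj)) • L.br y xj w := by
    intro aj xj hxj
    rw [L.skew₂₃ d aj w hw xj hxj y]
  rw [L.skew₂₃ (a₁ + a₂ + a₃) d (L.br x₁ x₂ x₃) hX (L.φ w) hφw (L.φ y),
    L.fund c d a₁ a₂ a₃ y hy w hw x₁ hx₁ x₂ hx₂ x₃ hx₃,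
    S a₁ x₁ hx₁, S a₂ x₂ hx₂, S a₃ x₃ hx₃]
  simp only [map_smul, LinearMap.smul_apply]
  rw [L.skew₁₂ (c + a₁ + d) a₂ (L.br y x₁ w) (L.br_deg c a₁ d y hy x₁ hx₁ w hw)
      (L.φ x₂) (L.φ_even a₂ x₂ hx₂) (L.φ x₃),
    L.skew₂₃ (c + a₁ + d) a₃ (L.br y x₁ w) (L.br_deg c a₁ d y hy x₁ hx₁ w hw)
      (L.φ x₃) (L.φ_even a₃ x₃ hx₃) (L.φ x₂),
    L.skew₂₃ (c + a₂ + d) a₃ (L.br y x₂ w) (L.br_deg c a₂ d y hy x₂ hx₂ w hw)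
      (L.φ x₃) (L.φ_even a₃ x₃ hx₃) (L.φ x₁),
    L.skew₁₂ a₁ a₃ (L.φ x₁) (L.φ_even a₁ x₁ hx₁) (L.φ x₃) (L.φ_even a₃ x₃ hx₃)
      (L.br y x₂ w)]
  match_scalars
  · simp only [hρ₂, hρ₂']
    linear_combination (ρ c a₂ * ρ c a₃ * ρ a₁ a₂ * ρ a₁ a₃) *
      ((ρ a₂ d * ρ d a₂) * (ρ a₃ d * ρ d a₃) * hρ₁ a₁ d
        + (ρ a₃ d * ρ d a₃) * hρ₁ a₂ d + hρ₁ a₃ d)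
  · simp only [hρ₂, hρ₂']
    linear_combination (ρ c a₁ * ρ c a₃ * ρ a₂ a₃ * ρ a₁ a₃) *
      ((ρ a₂ d * ρ d a₂) * (ρ a₃ d * ρ d a₃) * hρ₁ a₁ d
        + (ρ a₃ d * ρ d a₃) * hρ₁ a₂ d + hρ₁ a₃ d)
  · simp only [hρ₂, hρ₂']
    linear_combination (ρ c a₁ * ρ c a₂) *
      ((ρ a₂ d * ρ d a₂) * (ρ a₃ d * ρ d a₃) * hρ₁ a₁ d
        + (ρ a₃ d * ρ d a₃) * hρ₁ a₂ d + hρ₁ a₃ d)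

/-- For an abelian extension `0 → V → B → A → 0` of multiplicative
`3`-Hom-`ρ`-Lie algebras with section `δ`, the map `μ(f₁,f₂)(u) = [δ f₁, δ f₂, u]_B`
makes `(V, μ, φ_V)` a representation of `(A, φ)`. -/
theorem abelian_extension_isRep {k G V B A : Type*} [Field k]
    [AddCommGroup G] [DecidableEq G] [AddCommGroup V] [Module k V]
    [AddCommGroup B] [Module k B] [AddCommGroup A] [Module k A]
    (ρ : G → G → k)
    (hρ₁ : ∀ a b : G, ρ a b * ρ b a = 1)
    (hρ₂ : ∀ a b c : G, ρ (a + b) c = ρ a c * ρ b c)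
    (LV : ThreeHomRhoLie k G V ρ) (LB : ThreeHomRhoLie k G B ρ)
    (LA : ThreeHomRhoLie k G A ρ)
    (hmulV : ∀ f g h : V, LV.φ (LV.br f g h) = LV.br (LV.φ f) (LV.φ g) (LV.φ h))
    (hmulB : ∀ f g h : B, LB.φ (LB.br f g h) = LB.br (LB.φ f) (LB.φ g) (LB.φ h))
    (hmulA : ∀ f g h : A, LA.φ (LA.br f g h) = LA.br (LA.φ f) (LA.φ g) (LA.φ h))
    (i : V →ₗ[k] B) (p : B →ₗ[k] A)
    (hi_br : ∀ u v w : V, i (LV.br u v w) = LB.br (i u) (i v) (i w))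
    (hi_φ : i ∘ₗ LV.φ = LB.φ ∘ₗ i)
    (hi_deg : ∀ a : G, ∀ v ∈ LV.grading a, i v ∈ LB.grading a)
    (hi_reflect : ∀ (a : G) (v : V), i v ∈ LB.grading a → v ∈ LV.grading a)
    (hp_br : ∀ x y z : B, p (LB.br x y z) = LA.br (p x) (p y) (p z))
    (hp_φ : p ∘ₗ LB.φ = LA.φ ∘ₗ p)
    (hp_deg : ∀ a : G, ∀ b ∈ LB.grading a, p b ∈ LA.grading a)
    (hp_surj_deg : ∀ a : G, ∀ f ∈ LA.grading a, ∃ b ∈ LB.grading a, p b = f)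
    (hexact : LinearMap.range i = LinearMap.ker p)
    (hinj : LinearMap.ker i = ⊥)
    (hsurj : LinearMap.range p = ⊤)
    (hφV : (LinearMap.range i).map LB.φ = (LinearMap.range LV.φ).map i)
    (habelian : ∀ b : B, ∀ u v : V, LB.br b (i u) (i v) = 0)
    (δ : A →ₗ[k] B) (hδ : p ∘ₗ δ = LinearMap.id) (hδφ : δ ∘ₗ LA.φ = LB.φ ∘ₗ δ)
    (μ : A →ₗ[k] A →ₗ[k] Module.End k V)
    (hμ : ∀ (f₁ f₂ : A) (u : V), i (μ f₁ f₂ u) = LB.br (δ f₁) (δ f₂) (i u))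
    : IsRhoRep LA LV.grading LV.φ μ := by
  have hiinj : Function.Injective i := LinearMap.ker_eq_bot.mp hinj
  have hpφ : ∀ b : B, p (LB.φ b) = LA.φ (p b) := fun b => LinearMap.congr_fun hp_φ b
  have hiφ : ∀ v : V, i (LV.φ v) = LB.φ (i v) := fun v => LinearMap.congr_fun hi_φ v
  have hδp : ∀ f : A, p (δ f) = f := fun f => by simpa using LinearMap.congr_fun hδ f
  have hindB : ∀ (P : B → Prop), P 0 → (∀ x y, P x → P y → P (x + y)) →
      (∀ (a : G), ∀ x ∈ LB.grading a, P x) → ∀ x, P x := by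
    intro P h0 hadd hhom x
    have hx : x ∈ ⨆ a, LB.grading a := by
      rw [LB.isInternal.submodule_iSup_eq_top]; exact Submodule.mem_top
    exact Submodule.iSup_induction (motive := P) LB.grading hx hhom h0 hadd
  have hindV : ∀ (P : V → Prop), P 0 → (∀ x y, P x → P y → P (x + y)) →
      (∀ (a : G), ∀ x ∈ LV.grading a, P x) → ∀ x, P x := by
    intro P h0 hadd hhom x
    have hx : x ∈ ⨆ a, LV.grading a := by
      rw [LV.isInternal.submodule_iSup_eq_top]; exact Submodule.mem_top
    exact Submodule.iSup_induction (motive := P) LV.grading hx hhom h0 hadd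
  have z2 : ∀ (u : V) (x : B) (v : V), LB.br (i u) x (i v) = 0 := by
    intro u
    refine hindV (fun u => ∀ x v, LB.br (i u) x (i v) = 0) (by simp)
      (fun u₁ u₂ h₁ h₂ x v => by simp [map_add, LinearMap.add_apply, h₁, h₂]) ?_ u
    intro a u hu x
    refine hindB (fun x => ∀ v, LB.br (i u) x (i v) = 0) (by simp)
      (fun x₁ x₂ h₁ h₂ v => by simp [map_add, LinearMap.add_apply, h₁, h₂]) ?_ x
    intro b x hx v
    rw [LB.skew₁₂ a b (i u) (hi_deg a u hu) x hx (i v), habelian, smul_zero]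
  have key : ∀ (x y : B) (u : V), LB.br x y (i u) = i (μ (p x) (p y) u) := by
    intro x y u
    have hk1 : δ (p x) - x ∈ LinearMap.ker p := by
      rw [LinearMap.mem_ker, map_sub, hδp, sub_self]
    rw [← hexact] at hk1
    obtain ⟨w₁, hw₁⟩ := hk1
    have hk2 : δ (p y) - y ∈ LinearMap.ker p := by
      rw [LinearMap.mem_ker, map_sub, hδp, sub_self]
    rw [← hexact] at hk2
    obtain ⟨w₂, hw₂⟩ := hk2
    have h₁ : δ (p x) = x + i w₁ := by rw [hw₁]; abel
    have h₂ : δ (p y) = y + i w₂ := by rw [hw₂]; abel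
    rw [hμ, h₁, h₂]
    simp [map_add, LinearMap.add_apply, habelian, z2]
  refine { β_even := LV.φ_even, μ_deg := ?_, μ_skew := ?_, rep₁ := ?_, rep₂ := ?_,
           rep₃ := ?_, rep₄ := ?_ }
  · -- μ_deg
    intro a b c f hf g hg v hv
    obtain ⟨x, hx, hpx⟩ := hp_surj_deg a f hf
    obtain ⟨y, hy, hpy⟩ := hp_surj_deg b g hg
    have h := key x y v
    rw [hpx, hpy] at h
    apply hi_reflect
    rw [← h]
    exact LB.br_deg a b c x hx y hy (i v) (hi_deg c v hv)
  · -- μ_skew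
    intro a b c f hf g hg v hv
    obtain ⟨x, hx, hpx⟩ := hp_surj_deg a f hf
    obtain ⟨y, hy, hpy⟩ := hp_surj_deg b g hg
    apply hiinj
    rw [map_smul]
    have h₁ := key x y v; rw [hpx, hpy] at h₁
    have h₂ := key y x v; rw [hpx, hpy] at h₂
    rw [← h₁, ← h₂]
    exact LB.skew₁₂ a b x hx y hy (i v)
  · -- rep₁
    intro a₁ a₂ b₁ b₂ c f₁ hf₁ f₂ hf₂ g₁ hg₁ g₂ hg₂ v hv
    obtain ⟨x₁, hx₁, hpx₁⟩ := hp_surj_deg a₁ f₁ hf₁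
    obtain ⟨x₂, hx₂, hpx₂⟩ := hp_surj_deg a₂ f₂ hf₂
    obtain ⟨y₁, hy₁, hpy₁⟩ := hp_surj_deg b₁ g₁ hg₁
    obtain ⟨y₂, hy₂, hpy₂⟩ := hp_surj_deg b₂ g₂ hg₂
    have E₁ : i (μ (LA.br f₁ f₂ g₁) (LA.φ g₂) (LV.φ v))
        = LB.br (LB.br x₁ x₂ y₁) (LB.φ y₂) (LB.φ (i v)) := by
      have h := (key (LB.br x₁ x₂ y₁) (LB.φ y₂) (LV.φ v)).symm
      rw [hp_br, hpx₁, hpx₂, hpy₁, hpφ, hpy₂, hiφ] at h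
      exact h
    have E₂ : i (μ (LA.φ g₁) (LA.br f₁ f₂ g₂) (LV.φ v))
        = LB.br (LB.φ y₁) (LB.br x₁ x₂ y₂) (LB.φ (i v)) := by
      have h := (key (LB.φ y₁) (LB.br x₁ x₂ y₂) (LV.φ v)).symm
      rw [hp_br, hpx₁, hpx₂, hpy₂, hpφ, hpy₁, hiφ] at h
      exact h
    have h₁₂ := key y₁ y₂ v; rw [hpy₁, hpy₂] at h₁₂
    have h₁₂' := key x₁ x₂ v; rw [hpx₁, hpx₂] at h₁₂'
    have E₃ : i (μ (LA.φ f₁) (LA.φ f₂) (μ g₁ g₂ v))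
        = LB.br (LB.φ x₁) (LB.φ x₂) (LB.br y₁ y₂ (i v)) := by
      have h := (key (LB.φ x₁) (LB.φ x₂) (μ g₁ g₂ v)).symm
      simp only [hpφ] at h
      rw [hpx₁, hpx₂, ← h₁₂] at h
      exact h
    have E₄ : i (μ (LA.φ g₁) (LA.φ g₂) (μ f₁ f₂ v))
        = LB.br (LB.φ y₁) (LB.φ y₂) (LB.br x₁ x₂ (i v)) := by
      have h := (key (LB.φ y₁) (LB.φ y₂) (μ f₁ f₂ v)).symm
      simp only [hpφ] at h
      rw [hpy₁, hpy₂, ← h₁₂'] at h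
      exact h
    apply hiinj
    simp only [map_add, map_smul, map_sub]
    rw [E₁, E₂, E₃, E₄,
      LB.fund a₁ a₂ b₁ b₂ c x₁ hx₁ x₂ hx₂ y₁ hy₁ y₂ hy₂ (i v) (hi_deg c v hv)]
    abel
  · -- rep₂
    intro b₁ b₂ b₃ c d g₁ hg₁ g₂ hg₂ g₃ hg₃ f hf v hv
    obtain ⟨y₁, hy₁, hpy₁⟩ := hp_surj_deg b₁ g₁ hg₁
    obtain ⟨y₂, hy₂, hpy₂⟩ := hp_surj_deg b₂ g₂ hg₂
    obtain ⟨y₃, hy₃, hpy₃⟩ := hp_surj_deg b₃ g₃ hg₃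
    obtain ⟨x, hx, hpx⟩ := hp_surj_deg c f hf
    have E₀ : i (μ (LA.br g₁ g₂ g₃) (LA.φ f) (LV.φ v))
        = LB.br (LB.br y₁ y₂ y₃) (LB.φ x) (LB.φ (i v)) := by
      have h := (key (LB.br y₁ y₂ y₃) (LB.φ x) (LV.φ v)).symm
      rw [hp_br, hpy₁, hpy₂, hpy₃, hpφ, hpx, hiφ] at h
      exact h
    have k₁ := key y₁ x v; rw [hpy₁, hpx] at k₁
    have k₂ := key y₂ x v; rw [hpy₂, hpx] at k₂
    have k₃ := key y₃ x v; rw [hpy₃, hpx] at k₃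
    have E₁ : i (μ (LA.φ g₁) (LA.φ g₂) (μ g₃ f v))
        = LB.br (LB.φ y₁) (LB.φ y₂) (LB.br y₃ x (i v)) := by
      have h := (key (LB.φ y₁) (LB.φ y₂) (μ g₃ f v)).symm
      simp only [hpφ] at h
      rw [hpy₁, hpy₂, ← k₃] at h
      exact h
    have E₂ : i (μ (LA.φ g₂) (LA.φ g₃) (μ g₁ f v))
        = LB.br (LB.φ y₂) (LB.φ y₃) (LB.br y₁ x (i v)) := by
      have h := (key (LB.φ y₂) (LB.φ y₃) (μ g₁ f v)).symm
      simp only [hpφ] at h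
      rw [hpy₂, hpy₃, ← k₁] at h
      exact h
    have E₃ : i (μ (LA.φ g₃) (LA.φ g₁) (μ g₂ f v))
        = LB.br (LB.φ y₃) (LB.φ y₁) (LB.br y₂ x (i v)) := by
      have h := (key (LB.φ y₃) (LB.φ y₁) (μ g₂ f v)).symm
      simp only [hpφ] at h
      rw [hpy₃, hpy₁, ← k₂] at h
      exact h
    apply hiinj
    simp only [map_add, map_smul]
    rw [E₀, E₁, E₂, E₃]
    exact aux2 hρ₁ hρ₂ LB b₁ b₂ b₃ c d y₁ hy₁ y₂ hy₂ y₃ hy₃ x hx (i v) (hi_deg d v hv)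
  · -- rep₃
    intro c a₁ a₂ a₃ d g hg f₁ hf₁ f₂ hf₂ f₃ hf₃ v hv
    obtain ⟨y, hy, hpy⟩ := hp_surj_deg c g hg
    obtain ⟨x₁, hx₁, hpx₁⟩ := hp_surj_deg a₁ f₁ hf₁
    obtain ⟨x₂, hx₂, hpx₂⟩ := hp_surj_deg a₂ f₂ hf₂
    obtain ⟨x₃, hx₃, hpx₃⟩ := hp_surj_deg a₃ f₃ hf₃
    have E₀ : i (μ (LA.φ g) (LA.br f₁ f₂ f₃) (LV.φ v))
        = LB.br (LB.φ y) (LB.br x₁ x₂ x₃) (LB.φ (i v)) := by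
      have h := (key (LB.φ y) (LB.br x₁ x₂ x₃) (LV.φ v)).symm
      rw [hp_br, hpx₁, hpx₂, hpx₃, hpφ, hpy, hiφ] at h
      exact h
    have k₁ := key y x₁ v; rw [hpy, hpx₁] at k₁
    have k₂ := key y x₂ v; rw [hpy, hpx₂] at k₂
    have k₃ := key y x₃ v; rw [hpy, hpx₃] at k₃
    have E₁ : i (μ (LA.φ f₁) (LA.φ f₂) (μ g f₃ v))
        = LB.br (LB.φ x₁) (LB.φ x₂) (LB.br y x₃ (i v)) := by
      have h := (key (LB.φ x₁) (LB.φ x₂) (μ g f₃ v)).symm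
      simp only [hpφ] at h
      rw [hpx₁, hpx₂, ← k₃] at h
      exact h
    have E₂ : i (μ (LA.φ f₂) (LA.φ f₃) (μ g f₁ v))
        = LB.br (LB.φ x₂) (LB.φ x₃) (LB.br y x₁ (i v)) := by
      have h := (key (LB.φ x₂) (LB.φ x₃) (μ g f₁ v)).symm
      simp only [hpφ] at h
      rw [hpx₂, hpx₃, ← k₁] at h
      exact h
    have E₃ : i (μ (LA.φ f₃) (LA.φ f₁) (μ g f₂ v))
        = LB.br (LB.φ x₃) (LB.φ x₁) (LB.br y x₂ (i v)) := by
      have h := (key (LB.φ x₃) (LB.φ x₁) (μ g f₂ v)).symm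
      simp only [hpφ] at h
      rw [hpx₃, hpx₁, ← k₂] at h
      exact h
    apply hiinj
    simp only [map_add, map_smul]
    rw [E₀, E₁, E₂, E₃]
    exact aux3 hρ₁ hρ₂ LB c a₁ a₂ a₃ d y hy x₁ hx₁ x₂ hx₂ x₃ hx₃ (i v) (hi_deg d v hv)
  · -- rep₄
    intro a₁ a₂ b₁ b₂ c f₁ hf₁ f₂ hf₂ g₁ hg₁ g₂ hg₂ v hv
    obtain ⟨x₁, hx₁, hpx₁⟩ := hp_surj_deg a₁ f₁ hf₁
    obtain ⟨x₂, hx₂, hpx₂⟩ := hp_surj_deg a₂ f₂ hf₂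
    obtain ⟨y₁, hy₁, hpy₁⟩ := hp_surj_deg b₁ g₁ hg₁
    obtain ⟨y₂, hy₂, hpy₂⟩ := hp_surj_deg b₂ g₂ hg₂
    have E₁ : i (μ (LA.br f₁ f₂ g₁) (LA.φ g₂) (LV.φ v))
        = LB.br (LB.br x₁ x₂ y₁) (LB.φ y₂) (LB.φ (i v)) := by
      have h := (key (LB.br x₁ x₂ y₁) (LB.φ y₂) (LV.φ v)).symm
      rw [hp_br, hpx₁, hpx₂, hpy₁, hpφ, hpy₂, hiφ] at h
      exact h
    have E₂ : i (μ (LA.φ g₁) (LA.br f₁ f₂ g₂) (LV.φ v))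
        = LB.br (LB.φ y₁) (LB.br x₁ x₂ y₂) (LB.φ (i v)) := by
      have h := (key (LB.φ y₁) (LB.br x₁ x₂ y₂) (LV.φ v)).symm
      rw [hp_br, hpx₁, hpx₂, hpy₂, hpφ, hpy₁, hiφ] at h
      exact h
    have h₁₂ := key y₁ y₂ v; rw [hpy₁, hpy₂] at h₁₂
    have h₁₂' := key x₁ x₂ v; rw [hpx₁, hpx₂] at h₁₂'
    have E₃ : i (μ (LA.φ f₁) (LA.φ f₂) (μ g₁ g₂ v))
        = LB.br (LB.φ x₁) (LB.φ x₂) (LB.br y₁ y₂ (i v)) := by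
      have h := (key (LB.φ x₁) (LB.φ x₂) (μ g₁ g₂ v)).symm
      simp only [hpφ] at h
      rw [hpx₁, hpx₂, ← h₁₂] at h
      exact h
    have E₄ : i (μ (LA.φ g₁) (LA.φ g₂) (μ f₁ f₂ v))
        = LB.br (LB.φ y₁) (LB.φ y₂) (LB.br x₁ x₂ (i v)) := by
      have h := (key (LB.φ y₁) (LB.φ y₂) (μ f₁ f₂ v)).symm
      simp only [hpφ] at h
      rw [hpy₁, hpy₂, ← h₁₂'] at h
      exact h
    apply hiinj
    simp only [map_add, map_smul]
    rw [E₁, E₂, E₃, E₄,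
      LB.fund a₁ a₂ b₁ b₂ c x₁ hx₁ x₂ hx₂ y₁ hy₁ y₂ hy₂ (i v) (hi_deg c v hv)]
    abel
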